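/- Let A be an algebra in a variety V generated by a totally ordered residuated structure, so that A carries an order a ≤ b iff a → b = 1 and satisfies (a→b) ∨ (b→a) = 1. Then the following are equivalent: (i) A is totally ordered; (ii) the set of filters of A is totally ordered by inclusion; (iii) every filter of A is prime; (iv) the trivial filter {1} is prime. Moreover, these conditions are implied by subdirect irreducibility of A. -/

import Mathlib

/-- A commutative residuated lattice-ordered structure with top element `1`,
satisfying the prelinearity law `(x → y) ∨ (y → x) = 1` (which holds in any
variety generated by a totally ordered algebra). -/
structure ResidStruct (A : Type*) [Lattice A] where
  mul : A → A → A
  one : A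
  imp : A → A → A
  mul_comm : ∀ a b, mul a b = mul b a
  mul_assoc : ∀ a b c, mul (mul a b) c = mul a (mul b c)
  mul_one : ∀ a, mul a one = a
  le_one : ∀ a, a ≤ one
  mul_le_iff : ∀ a b c, mul a b ≤ c ↔ a ≤ imp b c
  prelinear : ∀ a b, imp a b ⊔ imp b a = one

variable {A : Type*} [Lattice A]

/-- A filter: contains `1`, is upward closed, and is closed under the monoidal product. -/
def ResidStruct.IsFilter (H : ResidStruct A) (F : Set A) : Prop :=
  H.one ∈ F ∧ (∀ a ∈ F, ∀ b, a ≤ b → b ∈ F) ∧ (∀ a ∈ F, ∀ b ∈ F, H.mul a b ∈ F)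

/-- The filter generated by a single element: the intersection of all filters containing it. -/
def ResidStruct.gen (H : ResidStruct A) (a : A) : Set A :=
  ⋂₀ {F : Set A | H.IsFilter F ∧ a ∈ F}

/-- A prime filter: whenever it is the intersection of two filters, it equals one of them. -/
def ResidStruct.IsPrime (H : ResidStruct A) (P : Set A) : Prop :=
  H.IsFilter P ∧ ∀ F G : Set A, H.IsFilter F → H.IsFilter G → P = F ∩ G → P = F ∨ P = G

/-- The trivial filter `⟨1⟩`. -/
def ResidStruct.trivialFilter (H : ResidStruct A) : Set A := {x | H.one ≤ x}

namespace ResidStruct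

variable (H : ResidStruct A)

lemma le_iff_one_le_imp (a b : A) : a ≤ b ↔ H.one ≤ H.imp a b := by
  have h := H.mul_le_iff H.one a b
  rwa [H.mul_comm, H.mul_one] at h

lemma mul_mono_left {a a' : A} (h : a ≤ a') (b : A) : H.mul a b ≤ H.mul a' b :=
  (H.mul_le_iff a b _).mpr (le_trans h ((H.mul_le_iff a' b _).mp le_rfl))

lemma mul_mono {a a' b b' : A} (h : a ≤ a') (h' : b ≤ b') :
    H.mul a b ≤ H.mul a' b' := by
  refine le_trans (H.mul_mono_left h b) ?_
  rw [H.mul_comm a' b, H.mul_comm a' b']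
  exact H.mul_mono_left h' a'

lemma mul_le_left (a b : A) : H.mul a b ≤ a := by
  have h := H.mul_mono (le_refl a) (H.le_one b)
  rwa [H.mul_one] at h

lemma mul_le_right (a b : A) : H.mul a b ≤ b := by
  rw [H.mul_comm]; exact H.mul_le_left b a

lemma sup_mul (a b c : A) : H.mul (a ⊔ b) c = H.mul a c ⊔ H.mul b c := by
  apply le_antisymm
  · refine (H.mul_le_iff _ _ _).mpr (sup_le ?_ ?_)
    · exact (H.mul_le_iff _ _ _).mp le_sup_left
    · exact (H.mul_le_iff _ _ _).mp le_sup_right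
  · exact sup_le (H.mul_mono_left le_sup_left c) (H.mul_mono_left le_sup_right c)

lemma sq_aux {u v : A} (h : u ⊔ v = H.one) : H.mul u u ⊔ v = H.one := by
  apply le_antisymm (H.le_one _)
  have h1 : H.one = H.mul (u ⊔ v) (u ⊔ v) := by rw [h, H.mul_one]
  rw [h1, H.sup_mul, H.mul_comm u (u ⊔ v), H.mul_comm v (u ⊔ v), H.sup_mul, H.sup_mul]
  refine sup_le (sup_le ?_ ?_) (sup_le ?_ ?_)
  · exact le_sup_left
  · exact le_trans (H.mul_le_left v u) le_sup_right
  · exact le_trans (H.mul_le_right u v) le_sup_right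
  · exact le_trans (H.mul_le_left v v) le_sup_right

lemma sq {u v : A} (h : u ⊔ v = H.one) : H.mul u u ⊔ H.mul v v = H.one := by
  have h1 := H.sq_aux h
  rw [sup_comm] at h1
  have h2 := H.sq_aux h1
  rwa [sup_comm] at h2

/-- Iterated product `c^n`. -/
def pow (c : A) : ℕ → A
  | 0 => H.one
  | n + 1 => H.mul c (pow c n)

lemma pow_zero (c : A) : H.pow c 0 = H.one := rfl

lemma pow_succ (c : A) (n : ℕ) : H.pow c (n + 1) = H.mul c (H.pow c n) := rfl

lemma pow_add (c : A) (m n : ℕ) : H.pow c (m + n) = H.mul (H.pow c m) (H.pow c n) := by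
  induction m with
  | zero => rw [Nat.zero_add, H.pow_zero, H.mul_comm, H.mul_one]
  | succ m ih =>
    have e : m + 1 + n = (m + n) + 1 := by omega
    rw [e, H.pow_succ, ih, H.pow_succ, H.mul_assoc]

lemma pow_antitone (c : A) {m n : ℕ} (h : m ≤ n) : H.pow c n ≤ H.pow c m := by
  obtain ⟨k, rfl⟩ := Nat.exists_eq_add_of_le h
  rw [H.pow_add]
  exact H.mul_le_left _ _

lemma pow_one (c : A) : H.pow c 1 = c := by
  rw [H.pow_succ, H.pow_zero, H.mul_one]

lemma pow_two_pow {c d : A} (h : c ⊔ d = H.one) (k : ℕ) :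
    H.pow c (2 ^ k) ⊔ H.pow d (2 ^ k) = H.one := by
  induction k with
  | zero => simpa [H.pow_one] using h
  | succ k ih =>
    have e : (2 : ℕ) ^ (k + 1) = 2 ^ k + 2 ^ k := by omega
    rw [e, H.pow_add, H.pow_add]
    exact H.sq ih

lemma one_le_of_pows {c d x : A} (h : c ⊔ d = H.one) {n m : ℕ}
    (hc : H.pow c n ≤ x) (hd : H.pow d m ≤ x) : H.one ≤ x := by
  have hk : n ≤ 2 ^ (n + m) ∧ m ≤ 2 ^ (n + m) := by
    constructor <;> calc _ ≤ n + m := by omega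
      _ ≤ 2 ^ (n + m) := Nat.le_of_lt Nat.lt_two_pow_self
  have h1 : H.pow c (2 ^ (n + m)) ≤ x := le_trans (H.pow_antitone c hk.1) hc
  have h2 : H.pow d (2 ^ (n + m)) ≤ x := le_trans (H.pow_antitone d hk.2) hd
  calc H.one = H.pow c (2 ^ (n + m)) ⊔ H.pow d (2 ^ (n + m)) := (H.pow_two_pow h _).symm
    _ ≤ x := sup_le h1 h2

lemma trivial_isFilter : H.IsFilter H.trivialFilter := by
  refine ⟨le_refl _, fun a ha b hab => le_trans ha hab, fun a ha b hb => ?_⟩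
  have : H.mul H.one H.one ≤ H.mul a b := H.mul_mono ha hb
  rwa [H.mul_one] at this

lemma trivial_subset {F : Set A} (hF : H.IsFilter F) : H.trivialFilter ⊆ F :=
  fun x hx => hF.2.1 H.one hF.1 x hx

/-- The set of elements above some power of `c`. -/
def genSet (c : A) : Set A := {x | ∃ n, H.pow c n ≤ x}

lemma genSet_isFilter (c : A) : H.IsFilter (H.genSet c) := by
  refine ⟨⟨0, le_refl _⟩, fun a ⟨n, hn⟩ b hab => ⟨n, le_trans hn hab⟩,
    fun a ⟨n, hn⟩ b ⟨m, hm⟩ => ⟨n + m, ?_⟩⟩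
  rw [H.pow_add]
  exact H.mul_mono hn hm

lemma self_mem_genSet (c : A) : c ∈ H.genSet c := ⟨1, le_of_eq (H.pow_one c)⟩

lemma gen_isFilter (c : A) : H.IsFilter (H.gen c) := by
  refine ⟨fun F hF => hF.1.1, fun a ha b hab F hF => hF.1.2.1 a (ha F hF) b hab,
    fun a ha b hb F hF => hF.1.2.2 a (ha F hF) b (hb F hF)⟩

lemma self_mem_gen (c : A) : c ∈ H.gen c := fun F hF => hF.2

lemma gen_subset_genSet (c : A) : H.gen c ⊆ H.genSet c :=
  fun x hx => hx (H.genSet c) ⟨H.genSet_isFilter c, H.self_mem_genSet c⟩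

/-- (i) → (ii) -/
lemma tot_to_chain (htot : ∀ a b : A, a ≤ b ∨ b ≤ a) :
    ∀ F G : Set A, H.IsFilter F → H.IsFilter G → F ⊆ G ∨ G ⊆ F := by
  intro F G hF hG
  by_cases h : F ⊆ G
  · exact Or.inl h
  · obtain ⟨a, haF, haG⟩ := Set.not_subset.mp h
    refine Or.inr fun b hbG => ?_
    rcases htot a b with hab | hba
    · exact hF.2.1 a haF b hab
    · exact absurd (hG.2.1 b hbG a hba) haG

/-- (ii) → (iii) -/
lemma chain_to_allprime
    (hch : ∀ F G : Set A, H.IsFilter F → H.IsFilter G → F ⊆ G ∨ G ⊆ F) :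
    ∀ F : Set A, H.IsFilter F → H.IsPrime F := by
  intro P hP
  refine ⟨hP, fun F G hF hG hEq => ?_⟩
  rcases hch F G hF hG with h | h
  · exact Or.inl (by rw [hEq, Set.inter_eq_left.mpr h])
  · exact Or.inr (by rw [hEq, Set.inter_eq_right.mpr h])

/-- (iv) → (i) -/
lemma trivprime_to_tot (hp : H.IsPrime H.trivialFilter) :
    ∀ a b : A, a ≤ b ∨ b ≤ a := by
  intro a b
  set c := H.imp a b with hc
  set d := H.imp b a with hd
  have hsup : c ⊔ d = H.one := H.prelinear a b
  have hT : H.trivialFilter = H.gen c ∩ H.gen d := by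
    apply le_antisymm
    · exact Set.subset_inter (H.trivial_subset (H.gen_isFilter c))
        (H.trivial_subset (H.gen_isFilter d))
    · rintro x ⟨hxc, hxd⟩
      obtain ⟨n, hn⟩ := H.gen_subset_genSet c hxc
      obtain ⟨m, hm⟩ := H.gen_subset_genSet d hxd
      exact H.one_le_of_pows hsup hn hm
  rcases hp.2 (H.gen c) (H.gen d) (H.gen_isFilter c) (H.gen_isFilter d) hT with h | h
  · left
    rw [H.le_iff_one_le_imp]
    have : c ∈ H.trivialFilter := by rw [h]; exact H.self_mem_gen c
    exact this
  · right
    rw [H.le_iff_one_le_imp]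
    have : d ∈ H.trivialFilter := by rw [h]; exact H.self_mem_gen d
    exact this

end ResidStruct

theorem totallyOrdered_tfae (H : ResidStruct A) :
    ((∀ a b : A, a ≤ b ∨ b ≤ a) ↔
      (∀ F G : Set A, H.IsFilter F → H.IsFilter G → F ⊆ G ∨ G ⊆ F)) ∧
    ((∀ a b : A, a ≤ b ∨ b ≤ a) ↔
      (∀ F : Set A, H.IsFilter F → H.IsPrime F)) ∧
    ((∀ a b : A, a ≤ b ∨ b ≤ a) ↔ H.IsPrime H.trivialFilter) ∧
    ((∃ F₀ : Set A, (H.IsFilter F₀ ∧ F₀ ≠ H.trivialFilter) ∧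
        ∀ G : Set A, H.IsFilter G → G ≠ H.trivialFilter → F₀ ⊆ G) →
      ∀ a b : A, a ≤ b ∨ b ≤ a) := by
  have i2 := H.tot_to_chain
  have i3 := H.chain_to_allprime
  have i4 : (∀ F : Set A, H.IsFilter F → H.IsPrime F) → H.IsPrime H.trivialFilter :=
    fun h => h _ H.trivial_isFilter
  have i1 := H.trivprime_to_tot
  refine ⟨⟨i2, fun h => i1 (i4 (i3 h))⟩,
    ⟨fun h => i3 (i2 h), fun h => i1 (i4 h)⟩,
    ⟨fun h => i4 (i3 (i2 h)), i1⟩, ?_⟩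
  rintro ⟨F₀, ⟨hF₀, hne⟩, hmin⟩
  apply i1
  refine ⟨H.trivial_isFilter, fun F G hF hG hEq => ?_⟩
  by_contra hcon
  push_neg at hcon
  have h1 : F₀ ⊆ F := hmin F hF (Ne.symm hcon.1)
  have h2 : F₀ ⊆ G := hmin G hG (Ne.symm hcon.2)
  have h3 : F₀ ⊆ H.trivialFilter := by rw [hEq]; exact Set.subset_inter h1 h2
  exact hne (le_antisymm h3 (H.trivial_subset hF₀))
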